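/- Perturbation-term bound: let J̃ be an N×(ML) real matrix with Gram matrix G = J̃ᵀ J̃ symmetric positive definite with all eigenvalues in [λ_min, λ_max], F = (1/M)·J̃ J̃ᵀ, λ > 0, K ∈ ℝ^{(ML)×M} the vertical stack of L copies of the M×M identity, J = J̃ K, and let η > 0. Then for every N×M real matrix D with spectral norm ‖D‖₂ ≤ λ_min/√λ_max and every r ∈ ℝᴹ, ‖(η/M)·Dᵀ (F + λI)⁻¹ J r‖₂ ≤ (η · λ_min · √L / √(λ²M² + λ_min·λM)) · ‖r‖₂. -/

import Mathlib

open Matrix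
open scoped Matrix.Norms.L2Operator

/-- The Euclidean (ℓ²) norm of a real vector. -/
noncomputable def vecEnorm {n : Type*} [Fintype n] (v : n → ℝ) : ℝ :=
  Real.sqrt (v ⬝ᵥ v)

section Aux

variable {n : Type*} [Fintype n]

lemma aux_dot_self_nonneg (v : n → ℝ) : 0 ≤ v ⬝ᵥ v :=
  Finset.sum_nonneg fun i _ => mul_self_nonneg _

lemma aux_enorm_nonneg (v : n → ℝ) : 0 ≤ vecEnorm v := Real.sqrt_nonneg _

lemma aux_enorm_sq (v : n → ℝ) : vecEnorm v * vecEnorm v = v ⬝ᵥ v :=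
  Real.mul_self_sqrt (aux_dot_self_nonneg v)

lemma aux_enorm_eq_norm (v : n → ℝ) :
    vecEnorm v = ‖(WithLp.equiv 2 (n → ℝ)).symm v‖ := by
  rw [EuclideanSpace.norm_eq, vecEnorm]
  congr 1
  rw [dotProduct]
  refine Finset.sum_congr rfl fun i _ => ?_
  simp [Real.norm_eq_abs, sq, abs_mul_abs_self]

lemma aux_dot_le_enorm_mul (v w : n → ℝ) : v ⬝ᵥ w ≤ vecEnorm v * vecEnorm w := by
  rw [aux_enorm_eq_norm v, aux_enorm_eq_norm w]
  have h := real_inner_le_norm ((WithLp.equiv 2 (n → ℝ)).symm v)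
    ((WithLp.equiv 2 (n → ℝ)).symm w)
  refine le_trans (le_of_eq ?_) h
  rw [PiLp.inner_apply]
  simp [dotProduct, RCLike.inner_apply, mul_comm]

lemma aux_enorm_smul (c : ℝ) (v : n → ℝ) : vecEnorm (c • v) = |c| * vecEnorm v := by
  rw [vecEnorm, vecEnorm, smul_dotProduct, dotProduct_smul, smul_eq_mul, smul_eq_mul,
    ← mul_assoc, Real.sqrt_mul (mul_self_nonneg c), Real.sqrt_mul_self_eq_abs]

lemma aux_enorm_mulVec_le [DecidableEq n] {m : Type*} [Fintype m] (A : Matrix m n ℝ) (x : n → ℝ) :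
    vecEnorm (A *ᵥ x) ≤ ‖A‖ * vecEnorm x := by
  rw [aux_enorm_eq_norm, aux_enorm_eq_norm]
  exact A.l2_opNorm_mulVec ((WithLp.equiv 2 (n → ℝ)).symm x)

lemma aux_smul_posSemidef [DecidableEq n] {A : Matrix n n ℝ} (hA : A.PosSemidef) {c : ℝ}
    (hc : 0 ≤ c) : (c • A).PosSemidef := by
  exact hA.smul hc

lemma aux_dot_self_pos [DecidableEq n] {v : n → ℝ} (hv : v ≠ 0) : 0 < v ⬝ᵥ v := by
  rcases Function.ne_iff.mp hv with ⟨i, hi⟩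
  have : (0:ℝ) < v i * v i := by
    have := mul_self_nonneg (v i)
    rcases this.lt_or_eq with h | h
    · exact h
    · exact absurd (by nlinarith [sq_nonneg (v i)] : v i = 0) hi
  refine Finset.sum_pos' (fun j _ => mul_self_nonneg _) ⟨i, Finset.mem_univ i, this⟩

lemma aux_smul_one_posDef [DecidableEq n] {a : ℝ} (ha : 0 < a) :
    (a • (1 : Matrix n n ℝ)).PosDef := by
  refine Matrix.PosDef.of_dotProduct_mulVec_pos ?_ fun x hx => ?_
  · simp [Matrix.IsHermitian, conjTranspose_smul]
  · have : star x ⬝ᵥ ((a • (1 : Matrix n n ℝ)) *ᵥ x) = a * (x ⬝ᵥ x) := by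
      simp [smul_mulVec, dotProduct_smul, star_trivial]
    rw [this]
    exact mul_pos ha (aux_dot_self_pos hx)

/-- If all eigenvalues of a real symmetric matrix are at most `a`, then `a•1 - G` is PSD. -/
lemma aux_le_smul_one_posSemidef [DecidableEq n] {G : Matrix n n ℝ} (hG : G.IsHermitian)
    {a : ℝ} (ha : ∀ i, hG.eigenvalues i ≤ a) : (a • 1 - G).PosSemidef := by
  set U : Matrix n n ℝ := (hG.eigenvectorUnitary : Matrix n n ℝ) with hU
  have hUU : U * star U = 1 := Matrix.mem_unitaryGroup_iff.mp hG.eigenvectorUnitary.2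
  have hGdec : G = U * Matrix.diagonal (fun i => hG.eigenvalues i) * Uᴴ := by
    conv_lhs => rw [hG.spectral_theorem]
    rw [← Matrix.star_eq_conjTranspose, RCLike.ofReal_real_eq_id]
    rfl
  have hdec : a • (1 : Matrix n n ℝ) - G
      = U * Matrix.diagonal (fun i => a - hG.eigenvalues i) * Uᴴ := by
    have h1 : Matrix.diagonal (fun i => a - hG.eigenvalues i)
        = a • (1 : Matrix n n ℝ) - Matrix.diagonal (fun i => hG.eigenvalues i) := by
      ext i j
      by_cases h : i = j <;>
        simp [Matrix.diagonal_apply, Matrix.one_apply, h, Matrix.sub_apply]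
    rw [h1, Matrix.mul_sub, Matrix.sub_mul, ← hGdec, Matrix.mul_smul, Matrix.smul_mul,
      Matrix.mul_one, ← Matrix.star_eq_conjTranspose, hUU]
  rw [hdec]
  exact (Matrix.posSemidef_diagonal_iff.mpr fun i =>
    sub_nonneg.mpr (ha i)).mul_mul_conjTranspose_same U

lemma aux_smul_one_le_posSemidef [DecidableEq n] {G : Matrix n n ℝ} (hG : G.IsHermitian)
    {a : ℝ} (ha : ∀ i, a ≤ hG.eigenvalues i) : (G - a • 1).PosSemidef := by
  set U : Matrix n n ℝ := (hG.eigenvectorUnitary : Matrix n n ℝ) with hU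
  have hUU : U * star U = 1 := Matrix.mem_unitaryGroup_iff.mp hG.eigenvectorUnitary.2
  have hGdec : G = U * Matrix.diagonal (fun i => hG.eigenvalues i) * Uᴴ := by
    conv_lhs => rw [hG.spectral_theorem]
    rw [← Matrix.star_eq_conjTranspose, RCLike.ofReal_real_eq_id]
    rfl
  have hdec : G - a • (1 : Matrix n n ℝ)
      = U * Matrix.diagonal (fun i => hG.eigenvalues i - a) * Uᴴ := by
    have h1 : Matrix.diagonal (fun i => hG.eigenvalues i - a)
        = Matrix.diagonal (fun i => hG.eigenvalues i) - a • (1 : Matrix n n ℝ) := by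
      ext i j
      by_cases h : i = j <;>
        simp [Matrix.diagonal_apply, Matrix.one_apply, h, Matrix.sub_apply]
    rw [h1, Matrix.mul_sub, Matrix.sub_mul, ← hGdec, Matrix.mul_smul, Matrix.smul_mul,
      Matrix.mul_one, ← Matrix.star_eq_conjTranspose, hUU]
  rw [hdec]
  exact (Matrix.posSemidef_diagonal_iff.mpr fun i =>
    sub_nonneg.mpr (ha i)).mul_mul_conjTranspose_same U

lemma aux_quad_le [DecidableEq n] {G : Matrix n n ℝ} {a : ℝ}
    (h : (a • 1 - G).PosSemidef) (v : n → ℝ) : v ⬝ᵥ (G *ᵥ v) ≤ a * (v ⬝ᵥ v) := by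
  have h2 := h.dotProduct_mulVec_nonneg v
  rw [Matrix.sub_mulVec, smul_mulVec, Matrix.one_mulVec, dotProduct_sub,
    dotProduct_smul, star_trivial, smul_eq_mul] at h2
  linarith

lemma aux_quad_ge [DecidableEq n] {G : Matrix n n ℝ} {a : ℝ}
    (h : (G - a • 1).PosSemidef) (v : n → ℝ) : a * (v ⬝ᵥ v) ≤ v ⬝ᵥ (G *ᵥ v) := by
  have h2 := h.dotProduct_mulVec_nonneg v
  rw [Matrix.sub_mulVec, smul_mulVec, Matrix.one_mulVec, dotProduct_sub,
    dotProduct_smul, star_trivial, smul_eq_mul] at h2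
  linarith

end Aux

set_option maxHeartbeats 2000000 in
theorem perturbation_term_bound (N M L : ℕ) (hM : 1 ≤ M) (lam : ℝ) (hlam : 0 < lam)
    (Jt : Matrix (Fin N) (Fin L × Fin M) ℝ)
    (G : Matrix (Fin L × Fin M) (Fin L × Fin M) ℝ) (hG : G = Jtᵀ * Jt)
    (hGpd : G.PosDef) (lamMin lamMax : ℝ) (hpos : 0 < lamMin) (hle : lamMin ≤ lamMax)
    (heig : ∀ μ : ℝ, (∃ p : Fin L × Fin M → ℝ, p ≠ 0 ∧ G.mulVec p = μ • p) →
      lamMin ≤ μ ∧ μ ≤ lamMax)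
    (F : Matrix (Fin N) (Fin N) ℝ) (hF : F = (1 / (M : ℝ)) • (Jt * Jtᵀ))
    (K : Matrix (Fin L × Fin M) (Fin M) ℝ)
    (hK : K = fun p j => if p.2 = j then (1 : ℝ) else 0)
    (J : Matrix (Fin N) (Fin M) ℝ) (hJ : J = Jt * K)
    (eta : ℝ) (heta : 0 < eta)
    (D : Matrix (Fin N) (Fin M) ℝ) (hD : ‖D‖ ≤ lamMin / Real.sqrt lamMax)
    (r : Fin M → ℝ) :
    vecEnorm ((eta / (M : ℝ)) •
        (Dᵀ * (F + lam • (1 : Matrix (Fin N) (Fin N) ℝ))⁻¹ * J).mulVec r) ≤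
      eta * lamMin * Real.sqrt (L : ℝ) /
        Real.sqrt (lam ^ 2 * (M : ℝ) ^ 2 + lamMin * (lam * (M : ℝ))) * vecEnorm r := by
  classical
  have hM0 : (0:ℝ) < (M:ℝ) := by exact_mod_cast hM
  have hHerm : G.IsHermitian := hGpd.isHermitian
  -- eigenvalue bounds
  have heigbd : ∀ i, lamMin ≤ hHerm.eigenvalues i ∧ hHerm.eigenvalues i ≤ lamMax := by
    intro i
    refine heig _ ⟨(hHerm.eigenvectorBasis i : Fin L × Fin M → ℝ), ?_, ?_⟩
    · exact fun h => hHerm.eigenvectorBasis.orthonormal.ne_zero i (by ext j; simp [h])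
    · exact hHerm.mulVec_eigenvectorBasis i
  have hPSDmax : (lamMax • 1 - G).PosSemidef :=
    aux_le_smul_one_posSemidef hHerm fun i => (heigbd i).2
  have hPSDmin : (G - lamMin • 1).PosSemidef :=
    aux_smul_one_le_posSemidef hHerm fun i => (heigbd i).1
  -- matrices
  set P : Matrix (Fin N) (Fin N) ℝ := F + lam • 1 with hPdef
  set H : Matrix (Fin L × Fin M) (Fin L × Fin M) ℝ := (1/(M:ℝ)) • G + lam • 1 with hHdef
  have hFpsd : F.PosSemidef := by
    rw [hF]
    refine aux_smul_posSemidef ?_ (by positivity)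
    have := Matrix.posSemidef_conjTranspose_mul_self Jtᴴ
    simpa [Matrix.conjTranspose_eq_transpose_of_trivial] using this
  have hPpd : P.PosDef := Matrix.PosDef.posSemidef_add hFpsd (aux_smul_one_posDef hlam)
  have hHpd : H.PosDef :=
    Matrix.PosDef.posSemidef_add
      (aux_smul_posSemidef hGpd.posSemidef (by positivity)) (aux_smul_one_posDef hlam)
  have hPunit : IsUnit P.det := hPpd.det_pos.ne'.isUnit
  have hHunit : IsUnit H.det := hHpd.det_pos.ne'.isUnit
  -- push-through identity
  have hPJ : P * Jt = Jt * H := by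
    rw [hPdef, hHdef, hF, hG]
    simp only [Matrix.add_mul, Matrix.mul_add, Matrix.smul_mul, Matrix.mul_smul,
      Matrix.one_mul, Matrix.mul_one, Matrix.mul_assoc]
  have hkey : P⁻¹ * Jt = Jt * H⁻¹ := by
    have h1 : P⁻¹ * (P * Jt) = Jt := by
      rw [← Matrix.mul_assoc, Matrix.nonsing_inv_mul P hPunit, Matrix.one_mul]
    calc P⁻¹ * Jt = P⁻¹ * Jt * (H * H⁻¹) := by
          rw [Matrix.mul_nonsing_inv H hHunit, Matrix.mul_one]
      _ = P⁻¹ * (P * Jt) * H⁻¹ := by rw [hPJ, ← Matrix.mul_assoc, Matrix.mul_assoc P⁻¹ Jt H]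
      _ = Jt * H⁻¹ := by rw [h1]
  -- vectors
  set w : Fin L × Fin M → ℝ := K *ᵥ r with hw
  set v : Fin L × Fin M → ℝ := H⁻¹ *ᵥ w with hv
  have hPv : ∀ x : Fin L × Fin M → ℝ, P⁻¹ *ᵥ (Jt *ᵥ x) = Jt *ᵥ (H⁻¹ *ᵥ x) := by
    intro x
    rw [Matrix.mulVec_mulVec, Matrix.mulVec_mulVec, hkey]
  have hz : (Dᵀ * P⁻¹ * J) *ᵥ r = Dᵀ *ᵥ (Jt *ᵥ v) := by
    rw [hJ, hv, hw, ← Matrix.mulVec_mulVec, ← Matrix.mulVec_mulVec, ← Matrix.mulVec_mulVec, hPv]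
  -- norm of w
  have hwr : ∀ p, w p = r p.2 := by
    intro p
    simp [hw, hK, Matrix.mulVec, dotProduct]
  have hwdot : w ⬝ᵥ w = (L:ℝ) * (r ⬝ᵥ r) := by
    simp only [dotProduct, hwr]
    rw [Fintype.sum_prod_type]
    simp [Finset.sum_const, Finset.card_univ, nsmul_eq_mul]
  have hwnorm : vecEnorm w = Real.sqrt (L:ℝ) * vecEnorm r := by
    rw [vecEnorm, vecEnorm, hwdot, Real.sqrt_mul (by positivity)]
  -- norm of Jt v
  have hJtv : vecEnorm (Jt *ᵥ v) ≤ Real.sqrt lamMax * vecEnorm v := by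
    have hdot : (Jt *ᵥ v) ⬝ᵥ (Jt *ᵥ v) = v ⬝ᵥ (G *ᵥ v) := by
      rw [hG, ← Matrix.mulVec_mulVec, dotProduct_mulVec v Jtᵀ (Jt *ᵥ v),
        Matrix.vecMul_transpose, dotProduct_mulVec]
    have hub : v ⬝ᵥ (G *ᵥ v) ≤ lamMax * (v ⬝ᵥ v) := aux_quad_le hPSDmax v
    rw [vecEnorm, hdot]
    calc Real.sqrt (v ⬝ᵥ (G *ᵥ v)) ≤ Real.sqrt (lamMax * (v ⬝ᵥ v)) := Real.sqrt_le_sqrt hub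
      _ = Real.sqrt lamMax * vecEnorm v := by
          rw [Real.sqrt_mul (le_trans hpos.le hle), vecEnorm]
  -- lower bound: vecEnorm w ≥ c * vecEnorm v
  set c : ℝ := lamMin / (M:ℝ) + lam with hc
  have hcpos : 0 < c := by positivity
  have hHsub : (H - c • 1).PosSemidef := by
    have heq : H - c • 1 = (1/(M:ℝ)) • (G - lamMin • 1) := by
      rw [hHdef, hc, smul_sub, smul_smul, add_smul, one_div_mul_eq_div]
      abel
    rw [heq]
    exact aux_smul_posSemidef hPSDmin (by positivity)
  have hwv : w = H *ᵥ v := by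
    rw [hv, Matrix.mulVec_mulVec, Matrix.mul_nonsing_inv H hHunit, Matrix.one_mulVec]
  have hlow : c * vecEnorm v ≤ vecEnorm w := by
    have h1 : c * (v ⬝ᵥ v) ≤ v ⬝ᵥ (H *ᵥ v) := aux_quad_ge hHsub v
    rw [← hwv] at h1
    have h2 : v ⬝ᵥ w ≤ vecEnorm v * vecEnorm w := aux_dot_le_enorm_mul v w
    rcases eq_or_lt_of_le (aux_enorm_nonneg v) with h0 | h0
    · rw [← h0, mul_zero]; exact aux_enorm_nonneg w
    · have hsq := aux_enorm_sq v
      have h3 : (c * vecEnorm v) * vecEnorm v ≤ vecEnorm w * vecEnorm v := by nlinarith [h1, h2]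
      exact le_of_mul_le_mul_right h3 h0
  -- D bound
  have hDt : ‖Dᵀ‖ ≤ lamMin / Real.sqrt lamMax := by
    rw [← Matrix.conjTranspose_eq_transpose_of_trivial, Matrix.l2_opNorm_conjTranspose]
    exact hD
  have hsltm : (0:ℝ) < Real.sqrt lamMax := Real.sqrt_pos.mpr (lt_of_lt_of_le hpos hle)
  have hDz : vecEnorm (Dᵀ *ᵥ (Jt *ᵥ v)) ≤ lamMin * vecEnorm v := by
    calc vecEnorm (Dᵀ *ᵥ (Jt *ᵥ v)) ≤ ‖Dᵀ‖ * vecEnorm (Jt *ᵥ v) := aux_enorm_mulVec_le _ _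
      _ ≤ (lamMin / Real.sqrt lamMax) * (Real.sqrt lamMax * vecEnorm v) := by
          exact mul_le_mul hDt hJtv (aux_enorm_nonneg _) (le_of_lt (div_pos hpos hsltm))
      _ = lamMin * vecEnorm v := by field_simp
  -- assemble
  have hvw : vecEnorm v ≤ vecEnorm w / c := by
    rw [le_div_iff₀ hcpos]; linarith [hlow]
  have hmain : vecEnorm ((eta / (M:ℝ)) • ((Dᵀ * P⁻¹ * J) *ᵥ r))
      ≤ eta * lamMin * Real.sqrt (L:ℝ) / (lamMin + lam * (M:ℝ)) * vecEnorm r := by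
    rw [aux_enorm_smul, hz, abs_of_pos (by positivity)]
    have h1 : vecEnorm (Dᵀ *ᵥ (Jt *ᵥ v)) ≤ lamMin * (vecEnorm w / c) := by
      refine le_trans hDz ?_
      exact mul_le_mul_of_nonneg_left hvw hpos.le
    calc (eta / (M:ℝ)) * vecEnorm (Dᵀ *ᵥ (Jt *ᵥ v))
        ≤ (eta / (M:ℝ)) * (lamMin * (vecEnorm w / c)) := by
          exact mul_le_mul_of_nonneg_left h1 (by positivity)
      _ = eta * lamMin * Real.sqrt (L:ℝ) / (lamMin + lam * (M:ℝ)) * vecEnorm r := by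
          rw [hwnorm, hc]
          field_simp
  refine le_trans hmain ?_
  -- compare denominators
  have hXpos : (0:ℝ) < lam ^ 2 * (M:ℝ) ^ 2 + lamMin * (lam * (M:ℝ)) := by positivity
  have hden : Real.sqrt (lam ^ 2 * (M:ℝ) ^ 2 + lamMin * (lam * (M:ℝ))) ≤ lamMin + lam * (M:ℝ) := by
    have h1 : lam ^ 2 * (M:ℝ) ^ 2 + lamMin * (lam * (M:ℝ)) ≤ (lamMin + lam * (M:ℝ))^2 := by
      nlinarith [sq_nonneg lamMin, mul_pos hpos (mul_pos hlam hM0)]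
    calc Real.sqrt (lam ^ 2 * (M:ℝ) ^ 2 + lamMin * (lam * (M:ℝ)))
        ≤ Real.sqrt ((lamMin + lam * (M:ℝ))^2) := Real.sqrt_le_sqrt h1
      _ = lamMin + lam * (M:ℝ) := Real.sqrt_sq (by positivity)
  have hsq : (0:ℝ) < Real.sqrt (lam ^ 2 * (M:ℝ) ^ 2 + lamMin * (lam * (M:ℝ))) :=
    Real.sqrt_pos.mpr hXpos
  apply mul_le_mul_of_nonneg_right _ (aux_enorm_nonneg r)
  exact div_le_div_of_nonneg_left (by positivity) hsq hden
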